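/- Let c : ℤ² → ℂ be finitely supported and set a := ∑_{(m,n)} c(m,n)·U^m·V^n. If a is self-adjoint (a = a*), then for every (m,n) ∈ ℤ², c(m,n) = conj(c(−m,−n)) · exp(−2πi·m·n·θ). -/

import Mathlib

open Complex

/-- Auxiliary commutation lemma: if `u v = w • (v u)` for unitaries, then
`u vⁿ = wⁿ • (vⁿ u)` for all integers `n`. -/
lemma unitary_zpow_comm {A : Type*} [CStarAlgebra A] (u v : unitary A) (w : ℂ)
    (hw : w ≠ 0) (huv : (u : A) * v = w • ((v : A) * u)) :
    ∀ n : ℤ, (u : A) * ((v ^ n : unitary A) : A)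
      = w ^ n • (((v ^ n : unitary A) : A) * u) := by
  have hvv : ((v⁻¹ : unitary A) : A) * v = 1 := by
    rw [← Unitary.star_eq_inv, Unitary.coe_star]
    exact Unitary.coe_star_mul_self v
  have hvv' : (v : A) * ((v⁻¹ : unitary A) : A) = 1 := by
    rw [← Unitary.star_eq_inv, Unitary.coe_star]
    exact Unitary.coe_mul_star_self v
  have hinv : (u : A) * ((v⁻¹ : unitary A) : A)
      = w⁻¹ • (((v⁻¹ : unitary A) : A) * u) := by
    have e1 : (u : A) = w • ((v : A) * u * ((v⁻¹ : unitary A) : A)) := by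
      have := congrArg (fun x => x * ((v⁻¹ : unitary A) : A)) huv
      simpa [mul_assoc, hvv', smul_mul_assoc] using this
    have e2 : ((v⁻¹ : unitary A) : A) * u
        = w • ((u : A) * ((v⁻¹ : unitary A) : A)) := by
      conv_lhs => rw [e1]
      rw [mul_smul_comm]
      congr 1
      rw [← mul_assoc, ← mul_assoc, hvv, one_mul]
    rw [e2, smul_smul, inv_mul_cancel₀ hw, one_smul]
  intro n
  induction n using Int.induction_on with
  | zero => simp
  | succ k ih =>
      have hz : v ^ ((k : ℤ) + 1) = v ^ (k : ℤ) * v := zpow_add_one v k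
      rw [hz]
      push_cast [Submonoid.coe_mul]
      rw [← mul_assoc, ih, smul_mul_assoc, mul_assoc, huv, mul_smul_comm,
        smul_smul, zpow_add_one₀ hw, ← mul_assoc]
  | pred k ih =>
      have hz : v ^ (-(k : ℤ) - 1) = v ^ (-(k : ℤ)) * v⁻¹ := zpow_sub_one v _
      rw [hz]
      push_cast [Submonoid.coe_mul]
      rw [← mul_assoc, ih, smul_mul_assoc, mul_assoc, hinv, mul_smul_comm,
        smul_smul, zpow_sub_one₀ hw, ← mul_assoc]

theorem coeff_symmetry_of_selfAdjoint
    {A : Type*} [CStarAlgebra A]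
    (θ : ℝ) (U V : unitary A)
    (hUV : (U : A) * V = Complex.exp (2 * Real.pi * Complex.I * θ) • ((V : A) * U))
    (τ : A →ₗ[ℂ] ℂ) (hτ1 : τ 1 = 1)
    (hτpos : ∀ x : A, (τ (star x * x)).im = 0 ∧ 0 ≤ (τ (star x * x)).re)
    (hτfaithful : ∀ x : A, τ (star x * x) = 0 → x = 0)
    (hτtrace : ∀ x y : A, τ (x * y) = τ (y * x))
    (hτUV : ∀ m n : ℤ, (m, n) ≠ (0, 0) → τ ((U ^ m * V ^ n : unitary A) : A) = 0)
    (c : ℤ × ℤ →₀ ℂ)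
    (a : A)
    (ha : a = ∑ p ∈ c.support, c p • ((U ^ p.1 * V ^ p.2 : unitary A) : A))
    (hsa : IsSelfAdjoint a) :
    ∀ m n : ℤ, c (m, n) =
      (starRingEnd ℂ) (c (-m, -n)) * Complex.exp (-2 * Real.pi * Complex.I * m * n * θ) := by
  set z : ℂ := Complex.exp (2 * Real.pi * Complex.I * θ) with hzdef
  have hzne : z ≠ 0 := Complex.exp_ne_zero _
  -- zpow commutation in both directions
  have c1 : ∀ n : ℤ, (U : A) * ((V ^ n : unitary A) : A)
      = z ^ n • (((V ^ n : unitary A) : A) * U) :=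
    unitary_zpow_comm U V z hzne hUV
  have c2 : ∀ m n : ℤ, ((U ^ m * V ^ n : unitary A) : A)
      = z ^ (m * n) • ((V ^ n * U ^ m : unitary A) : A) := by
    intro m n
    have h1 : ((V ^ n : unitary A) : A) * U = (z ^ n)⁻¹ • ((U : A) * ((V ^ n : unitary A) : A)) := by
      rw [c1 n, smul_smul, inv_mul_cancel₀ (zpow_ne_zero _ hzne), one_smul]
    have h2 := unitary_zpow_comm (V ^ n) U ((z ^ n)⁻¹) (inv_ne_zero (zpow_ne_zero _ hzne)) h1 m
    -- h2 : V^n * U^m = (z^n)⁻¹^m • (U^m * V^n)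
    rw [Submonoid.coe_mul, Submonoid.coe_mul, h2, smul_smul]
    rw [← zpow_neg, ← zpow_mul, ← zpow_add₀ hzne]
    ring_nf
    simp
  -- star of basis elements
  have hstar : ∀ p q : ℤ, star ((U ^ p * V ^ q : unitary A) : A)
      = z ^ (-(p * q)) • ((U ^ (-p) * V ^ (-q) : unitary A) : A) := by
    intro p q
    have h1 : star ((U ^ p * V ^ q : unitary A) : A)
        = (((U ^ p * V ^ q : unitary A)⁻¹ : unitary A) : A) := by
      rw [← Unitary.star_eq_inv, Unitary.coe_star]
    have h2 : (U ^ p * V ^ q : unitary A)⁻¹ = V ^ (-q) * U ^ (-p) := by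
      rw [mul_inv_rev, ← zpow_neg, ← zpow_neg]
    have h3 := c2 (-p) (-q)
    have h4 : ((V ^ (-q) * U ^ (-p) : unitary A) : A)
        = z ^ (-(p * q)) • ((U ^ (-p) * V ^ (-q) : unitary A) : A) := by
      rw [h3, smul_smul, ← zpow_add₀ hzne]
      ring_nf
      simp
    rw [h1, h2, h4]
  -- value of τ on basis elements
  have hτW : ∀ p q : ℤ, τ ((U ^ p * V ^ q : unitary A) : A)
      = if p = 0 ∧ q = 0 then 1 else 0 := by
    intro p q
    by_cases h : p = 0 ∧ q = 0
    · obtain ⟨hp, hq⟩ := h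
      simp [hp, hq, hτ1]
    · rw [if_neg h]
      exact hτUV p q (by simpa [Prod.ext_iff] using h)
  -- orthogonality
  have horth : ∀ m n p q : ℤ,
      τ ((((U ^ m * V ^ n : unitary A)⁻¹ : unitary A) : A) * ((U ^ p * V ^ q : unitary A) : A))
      = if p = m ∧ q = n then 1 else 0 := by
    intro m n p q
    have h1 : (U ^ m * V ^ n : unitary A)⁻¹ * (U ^ p * V ^ q)
        = V ^ (-n) * (U ^ (p - m) * V ^ q) := by group
    have h2 : (((U ^ m * V ^ n : unitary A)⁻¹ : unitary A) : A) * ((U ^ p * V ^ q : unitary A) : A)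
        = ((V ^ (-n) : unitary A) : A) * ((U ^ (p - m) * V ^ q : unitary A) : A) := by
      rw [← Submonoid.coe_mul, ← Submonoid.coe_mul, h1]
    rw [h2, hτtrace, ← Submonoid.coe_mul]
    have h3 : (U ^ (p - m) * V ^ q : unitary A) * V ^ (-n) = U ^ (p - m) * V ^ (q - n) := by
      group
    rw [h3, hτW]
    congr 1
    simp [sub_eq_zero, eq_iff_iff, and_congr]
  intro m n
  -- extraction of c (m, n)
  have h1 : τ ((((U ^ m * V ^ n : unitary A)⁻¹ : unitary A) : A) * a) = c (m, n) := by
    rw [ha, Finset.mul_sum, map_sum]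
    have : ∀ p ∈ c.support,
        τ ((((U ^ m * V ^ n : unitary A)⁻¹ : unitary A) : A)
          * (c p • ((U ^ p.1 * V ^ p.2 : unitary A) : A)))
        = if p = (m, n) then c p else 0 := by
      intro p _
      rw [mul_smul_comm, map_smul, horth, smul_eq_mul]
      by_cases h : p = (m, n)
      · simp [h]
      · have : ¬(p.1 = m ∧ p.2 = n) := by simpa [Prod.ext_iff] using h
        simp [h, this]
    rw [Finset.sum_congr rfl this, Finset.sum_ite_eq' c.support (m, n)]
    by_cases h : (m, n) ∈ c.support
    · rw [if_pos h]
    · rw [if_neg h, eq_comm]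
      exact Finsupp.notMem_support_iff.mp h
  -- extraction from star a
  have h2 : τ ((((U ^ m * V ^ n : unitary A)⁻¹ : unitary A) : A) * star a)
      = (starRingEnd ℂ) (c (-m, -n)) * z ^ (-(m * n)) := by
    rw [ha, star_sum, Finset.mul_sum, map_sum]
    have : ∀ p ∈ c.support,
        τ ((((U ^ m * V ^ n : unitary A)⁻¹ : unitary A) : A)
          * star (c p • ((U ^ p.1 * V ^ p.2 : unitary A) : A)))
        = if p = (-m, -n) then (starRingEnd ℂ) (c p) * z ^ (-(p.1 * p.2)) else 0 := by
      intro p _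
      rw [star_smul, hstar, smul_smul, mul_smul_comm, map_smul, horth, smul_eq_mul]
      by_cases h : p = (-m, -n)
      · have h' : -p.1 = m ∧ -p.2 = n := by
          constructor <;> simp [h]
        rw [if_pos h', if_pos h, mul_one, starRingEnd_apply]
      · have h' : ¬(-p.1 = m ∧ -p.2 = n) := by
          intro ⟨ha1, ha2⟩
          exact h (Prod.ext (by omega) (by omega))
        rw [if_neg h', if_neg h, mul_zero]
    rw [Finset.sum_congr rfl this, Finset.sum_ite_eq' c.support (-m, -n)]
    by_cases h : (-m, -n) ∈ c.support
    · rw [if_pos h]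
      norm_num
    · rw [if_neg h, Finsupp.notMem_support_iff.mp h, map_zero, zero_mul]
  have key : c (m, n) = (starRingEnd ℂ) (c (-m, -n)) * z ^ (-(m * n)) := by
    rw [← h1, ← h2, hsa.star_eq]
  rw [key]
  congr 1
  rw [hzdef, ← Complex.exp_int_mul]
  congr 1
  push_cast
  ring
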